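/- Let n ≥ 2, let u and v be unit vectors in the Euclidean space ℝⁿ with u ≠ v and u ≠ -v, and let 0 < r < 1. Then the distance from the origin to the affine span of {u, v} (the line through u and v), multiplied by the distance from the origin to the set {x ∈ ℝⁿ : ⟨u, x⟩ = -r and ⟨v, x⟩ = -r}, equals r. -/

import Mathlib

open scoped RealInnerProductSpace

set_option maxHeartbeats 1600000 in
/-- Proposition 1 of the paper: for unit vectors `u ≠ ±v` in `ℝⁿ` and `0 < r < 1`,
the distance from the origin to the line through `u` and `v`, multiplied by the distance
from the origin to `{x : ⟪u,x⟫ = -r ∧ ⟪v,x⟫ = -r}`, equals `r`. -/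
theorem stmt_0 (n : ℕ) (hn : 2 ≤ n) (u v : EuclideanSpace ℝ (Fin n))
    (hu : ‖u‖ = 1) (hv : ‖v‖ = 1) (huv : u ≠ v) (huv' : u ≠ -v)
    (r : ℝ) (hr0 : 0 < r) (hr1 : r < 1) :
    Metric.infDist 0 ((affineSpan ℝ {u, v} : AffineSubspace ℝ (EuclideanSpace ℝ (Fin n))) : Set (EuclideanSpace ℝ (Fin n))) *
      Metric.infDist 0 {x : EuclideanSpace ℝ (Fin n) | ⟪u, x⟫ = -r ∧ ⟪v, x⟫ = -r} = r := by
  set w : EuclideanSpace ℝ (Fin n) := u + v with hw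
  have hw0 : w ≠ 0 := by
    intro h
    apply huv'
    have : u = -v := by
      have := congrArg (fun z => z - v) h
      simpa [hw, add_sub_cancel_right, sub_eq_iff_eq_add] using this
    exact this
  have hwn : (0:ℝ) < ‖w‖ := norm_pos_iff.mpr hw0
  have huu : ⟪u, u⟫ = 1 := by
    rw [real_inner_self_eq_norm_sq, hu]; ring
  have hvv : ⟪v, v⟫ = 1 := by
    rw [real_inner_self_eq_norm_sq, hv]; ring
  have hw2 : ‖w‖ ^ 2 = 2 + 2 * ⟪u, v⟫ := by
    have := norm_add_sq_real u v
    rw [hu, hv] at this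
    rw [hw]
    nlinarith [this]
  have huw : ⟪u, w⟫ = 1 + ⟪u, v⟫ := by
    simp [hw, inner_add_right, huu, hu]
  have hvw : ⟪v, w⟫ = 1 + ⟪u, v⟫ := by
    rw [hw, inner_add_right, hvv, real_inner_comm v u]
    ring
  have hortho : ⟪v - u, w⟫ = 0 := by
    simp only [inner_sub_left, huw, hvw]
    ring
  -- first distance
  have d1 : Metric.infDist 0 ((affineSpan ℝ {u, v} : AffineSubspace ℝ (EuclideanSpace ℝ (Fin n))) : Set (EuclideanSpace ℝ (Fin n))) = ‖w‖ / 2 := by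
    have hmem : midpoint ℝ u v ∈ (affineSpan ℝ {u, v} : AffineSubspace ℝ (EuclideanSpace ℝ (Fin n))) := by
      have := AffineMap.lineMap_mem_affineSpan_pair (1/2 : ℝ) u v
      simpa [AffineMap.lineMap_apply, midpoint] using this
    have hmid : midpoint ℝ u v = (1/2 : ℝ) • w := by
      rw [midpoint_eq_smul_add, hw]
      norm_num
    apply le_antisymm
    · calc Metric.infDist 0 _ ≤ dist 0 (midpoint ℝ u v) := Metric.infDist_le_dist_of_mem hmem
        _ = ‖w‖ / 2 := by
            rw [dist_zero_left, hmid, norm_smul]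
            simp
            ring
    · by_contra hlt
      push_neg at hlt
      obtain ⟨y, hy, hdy⟩ := (Metric.infDist_lt_iff ⟨_, hmem⟩).mp hlt
      rw [dist_zero_left] at hdy
      -- y = s • (v - u) + u
      have hy' : (y - u) +ᵥ u ∈ (affineSpan ℝ {u, v} : AffineSubspace ℝ (EuclideanSpace ℝ (Fin n))) := by
        simpa using hy
      obtain ⟨s, hs⟩ := vadd_left_mem_affineSpan_pair.mp hy'
      have hyeq : y = (s - 1/2) • (v - u) + (1/2 : ℝ) • w := by
        have h3 : s • (v - u) = y - u := by simpa [vsub_eq_sub] using hs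
        have h4 : y = s • (v - u) + u := by rw [h3]; abel
        rw [h4, hw]
        module
      have hnorm2 : ‖y‖ ^ 2 = ‖(s - 1/2) • (v - u)‖ ^ 2 + ‖(1/2 : ℝ) • w‖ ^ 2 := by
        rw [hyeq]
        have hperp : ⟪(s - 1/2) • (v - u), (1/2 : ℝ) • w⟫ = 0 := by
          rw [real_inner_smul_left, real_inner_smul_right, hortho]
          ring
        have := norm_add_sq_real ((s - 1/2) • (v - u)) ((1/2 : ℝ) • w)
        rw [hperp] at this
        linarith
      have hhalf : ‖(1/2 : ℝ) • w‖ = ‖w‖ / 2 := by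
        rw [norm_smul]
        simp
        ring
      have hge : ‖w‖ / 2 ≤ ‖y‖ := by
        nlinarith [norm_nonneg y, norm_nonneg ((s - 1/2) • (v - u)), hnorm2, hhalf, hwn]
      linarith
  -- second distance
  have ht : (0:ℝ) < 1 + ⟪u, v⟫ := by nlinarith [hwn, hw2]
  set x₀ : EuclideanSpace ℝ (Fin n) := (-(2 * r) / ‖w‖ ^ 2) • w with hx₀
  have hx₀mem : x₀ ∈ {x : EuclideanSpace ℝ (Fin n) | ⟪u, x⟫ = -r ∧ ⟪v, x⟫ = -r} := by
    constructor
    · rw [hx₀, real_inner_smul_right, huw, hw2]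
      have hne : (2:ℝ) + 2 * ⟪u, v⟫ ≠ 0 := by nlinarith
      rw [div_mul_eq_mul_div, div_eq_iff hne]
      ring
    · rw [hx₀, real_inner_smul_right, hvw, hw2]
      have hne : (2:ℝ) + 2 * ⟪u, v⟫ ≠ 0 := by nlinarith
      rw [div_mul_eq_mul_div, div_eq_iff hne]
      ring
  have d2 : Metric.infDist 0 {x : EuclideanSpace ℝ (Fin n) | ⟪u, x⟫ = -r ∧ ⟪v, x⟫ = -r} = 2 * r / ‖w‖ := by
    apply le_antisymm
    · calc Metric.infDist 0 _ ≤ dist 0 x₀ := Metric.infDist_le_dist_of_mem hx₀mem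
        _ = 2 * r / ‖w‖ := by
            rw [dist_zero_left, hx₀, norm_smul]
            rw [Real.norm_eq_abs, abs_div, abs_neg, abs_of_pos (by positivity : (0:ℝ) < 2*r)]
            rw [abs_of_pos (by positivity : (0:ℝ) < ‖w‖^2)]
            rw [sq, ← div_div, div_mul_cancel₀ _ (ne_of_gt hwn)]
    · by_contra hlt
      push_neg at hlt
      obtain ⟨y, hy, hdy⟩ := (Metric.infDist_lt_iff ⟨_, hx₀mem⟩).mp hlt
      obtain ⟨h1, h2⟩ := hy
      rw [dist_zero_left] at hdy
      have hwy : ⟪w, y⟫ = -(2 * r) := by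
        rw [hw, inner_add_left, h1, h2]; ring
      have hcs : |⟪w, y⟫| ≤ ‖w‖ * ‖y‖ := abs_real_inner_le_norm w y
      rw [hwy, abs_neg, abs_of_pos (by positivity : (0:ℝ) < 2*r)] at hcs
      have hge : 2 * r / ‖w‖ ≤ ‖y‖ := by
        rw [div_le_iff₀ hwn]
        calc 2 * r ≤ ‖w‖ * ‖y‖ := hcs
          _ = ‖y‖ * ‖w‖ := mul_comm _ _
      exact absurd hdy (not_lt.mpr hge)
  rw [d1, d2]
  rw [div_mul_div_comm]
  have h : ‖w‖ * (2 * r) = (2 * ‖w‖) * r := by ring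
  have hne2 : (2:ℝ) * ‖w‖ ≠ 0 := ne_of_gt (by linarith)
  rw [h, mul_div_assoc, mul_comm, div_mul_cancel₀ _ hne2]
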